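/- arXiv:1403.5013 — 4 statements merged into one kernel-verified Lean document; each statement's English description precedes it below -/
import Mathlib

section
/- Let G be a simple graph and f : V(G) → Fin 4 a proper coloring of G such that for every two colors i, j the subgraph of G induced by the vertices colored i or j is acyclic. Let v be a vertex of G whose open neighborhood is exactly {v1, v2, v3, v4}, where v1v2, v2v3, v3v4, v4v1 are edges of G and v1v3, v2v4 are not edges of G. Then exactly one of the equalities f(v1) = f(v3) and f(v2) = f(v4) holds; consequently, f uses exactly three colors on the neighborhood of v. -/
open SimpleGraph

/-- A tree-coloring of `G`: a proper vertex coloring with 4 colors such that for every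
two colors the subgraph induced by the vertices of those two colors is acyclic. -/
def IsTreeColoring {V : Type*} (G : SimpleGraph V) (f : V → Fin 4) : Prop :=
  (∀ ⦃u v : V⦄, G.Adj u v → f u ≠ f v) ∧
  ∀ i j : Fin 4, (G.induce {v | f v = i ∨ f v = j}).IsAcyclic

/-- If `v` is a vertex whose open neighborhood is exactly `{v1, v2, v3, v4}`, forming
an induced 4-cycle `v1 v2 v3 v4`, then under a tree-coloring exactly one of
`f v1 = f v3` and `f v2 = f v4` holds, and `f` uses exactly three colors on the
neighborhood of `v`. -/
theorem tree_coloring_four_wheel_three_colors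
    {V : Type*} (G : SimpleGraph V) (f : V → Fin 4) (hf : IsTreeColoring G f)
    (v v1 v2 v3 v4 : V)
    (hnbr : G.neighborSet v = {v1, v2, v3, v4})
    (h12 : G.Adj v1 v2) (h23 : G.Adj v2 v3) (h34 : G.Adj v3 v4) (h41 : G.Adj v4 v1)
    (h13 : ¬ G.Adj v1 v3) (h24 : ¬ G.Adj v2 v4)
    (hne13 : v1 ≠ v3) (hne24 : v2 ≠ v4) :
    Xor' (f v1 = f v3) (f v2 = f v4) ∧
      ({f v1, f v2, f v3, f v4} : Finset (Fin 4)).card = 3 := by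
  obtain ⟨hprop, hacyc⟩ := hf
  have hv1 : G.Adj v v1 := by rw [← SimpleGraph.mem_neighborSet, hnbr]; simp
  have hv2 : G.Adj v v2 := by rw [← SimpleGraph.mem_neighborSet, hnbr]; simp
  have hv3 : G.Adj v v3 := by rw [← SimpleGraph.mem_neighborSet, hnbr]; simp
  have hv4 : G.Adj v v4 := by rw [← SimpleGraph.mem_neighborSet, hnbr]; simp
  have f01 := hprop hv1
  have f02 := hprop hv2
  have f03 := hprop hv3
  have f04 := hprop hv4
  have f12 := hprop h12
  have f23 := hprop h23
  have f34 := hprop h34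
  have f41 := (hprop h41).symm
  -- not both
  have hnotboth : ¬ (f v1 = f v3 ∧ f v2 = f v4) := by
    rintro ⟨e13, e24⟩
    set S : Set V := {w | f w = f v1 ∨ f w = f v2} with hS
    have m1 : v1 ∈ S := Or.inl rfl
    have m2 : v2 ∈ S := Or.inr rfl
    have m3 : v3 ∈ S := Or.inl e13.symm
    have m4 : v4 ∈ S := Or.inr e24.symm
    let a1 : S := ⟨v1, m1⟩
    let a2 : S := ⟨v2, m2⟩
    let a3 : S := ⟨v3, m3⟩
    let a4 : S := ⟨v4, m4⟩
    have ha12 : (G.induce S).Adj a1 a2 := h12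
    have ha23 : (G.induce S).Adj a2 a3 := h23
    have ha34 : (G.induce S).Adj a3 a4 := h34
    have ha41 : (G.induce S).Adj a4 a1 := h41
    let c : (G.induce S).Walk a1 a1 :=
      Walk.cons ha12 (Walk.cons ha23 (Walk.cons ha34 (Walk.cons ha41 Walk.nil)))
    have hc : c.IsCycle := by
      have n12 : v1 ≠ v2 := h12.ne
      have n23 : v2 ≠ v3 := h23.ne
      have n34 : v3 ≠ v4 := h34.ne
      have n41 : v4 ≠ v1 := h41.ne
      simp [c, Walk.isCycle_def, Walk.isTrail_def, a1, a2, a3, a4,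
        Subtype.ext_iff, Sym2.eq, Sym2.rel_iff', n12, n23, n34, n41,
        hne13, hne24, hne13.symm, hne24.symm, n12.symm, n23.symm, n34.symm, n41.symm]
    exact hacyc (f v1) (f v2) c hc
  -- at least one
  have hone : f v1 = f v3 ∨ f v2 = f v4 := by
    by_contra h
    push_neg at h
    obtain ⟨g13, g24⟩ := h
    have hcard : ({f v, f v1, f v2, f v3, f v4} : Finset (Fin 4)).card = 5 := by
      rw [Finset.card_insert_of_notMem (by simp [f01, f02, f03, f04]),
        Finset.card_insert_of_notMem (by simp [f12, g13, f41]),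
        Finset.card_insert_of_notMem (by simp [f23, g24]),
        Finset.card_insert_of_notMem (by simp [f34])]
      simp
    have := Finset.card_le_univ ({f v, f v1, f v2, f v3, f v4} : Finset (Fin 4))
    simp [hcard] at this
  constructor
  · rcases hone with e | e
    · exact Or.inl ⟨e, fun h => hnotboth ⟨e, h⟩⟩
    · exact Or.inr ⟨e, fun h => hnotboth ⟨h, e⟩⟩
  · rcases hone with e | e
    · have g24 : f v2 ≠ f v4 := fun h => hnotboth ⟨e, h⟩
      rw [show ({f v1, f v2, f v3, f v4} : Finset (Fin 4)) = {f v1, f v2, f v4} by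
        rw [← e]; ext x; simp; tauto]
      rw [Finset.card_insert_of_notMem (by simp [f12, f41]),
        Finset.card_insert_of_notMem (by simp [g24])]
      simp
    · have g13 : f v1 ≠ f v3 := fun h => hnotboth ⟨h, e⟩
      rw [show ({f v1, f v2, f v3, f v4} : Finset (Fin 4)) = {f v1, f v2, f v3} by
        rw [← e]; ext x; simp; tauto]
      rw [Finset.card_insert_of_notMem (by simp [f12, g13]),
        Finset.card_insert_of_notMem (by simp [f23])]
      simp
end

section
/- Let G be a finite simple graph on n ≥ 5 vertices such that G is connected, G has exactly 3n − 6 edges, and the open neighborhood of every vertex induces a cycle in G (these conditions characterize 4-connected maximal planar graphs). Let f be a tree-coloring of G, and let v be a vertex of degree 4 whose neighbors in cyclic order around v are v1, v2, v3, v4 (so v1v2, v2v3, v3v4, v4v1 are edges and v1v3, v2v4 are non-edges), with f(v1) ≠ f(v3). Then f uses exactly three colors on {v1, v2, v3, v4}, and both v1 and v3 have degree at least 5 in G. -/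
open SimpleGraph

/-- The open neighborhood of `v` induces a cycle in `G`. -/
def NeighborhoodInducesCycle {V : Type*} (G : SimpleGraph V) (v : V) : Prop :=
  ∃ m : ℕ, 3 ≤ m ∧ Nonempty ((G.induce (G.neighborSet v)) ≃g cycleGraph m)

private lemma no_two_paths {W : Type*} {H : SimpleGraph W} (hH : H.IsAcyclic)
    {p q r s : W} (hpq : H.Adj p q) (hqr : H.Adj q r) (hps : H.Adj p s) (hsr : H.Adj s r)
    (hqs : q ≠ s) (hpr : p ≠ r) : False := by
  rw [isAcyclic_iff_path_unique] at hH
  have h := hH ⟨Walk.cons hpq (Walk.cons hqr Walk.nil), by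
      simp [Walk.isPath_def, hpq.ne, hpr, hqr.ne]⟩
    ⟨Walk.cons hps (Walk.cons hsr Walk.nil), by
      simp [Walk.isPath_def, hps.ne, hpr, hsr.ne]⟩
  have h2 := congrArg (fun P : H.Path p r => (P : H.Walk p r).support) h
  simp at h2
  exact hqs h2

private lemma cycle_two_nbrs {W : Type*} {H : SimpleGraph W} {m : ℕ} (hm : 3 ≤ m)
    (e : H ≃g cycleGraph m) (x : W) :
    ∃ y z, y ≠ z ∧ H.Adj x y ∧ H.Adj x z := by
  obtain ⟨n, rfl⟩ : ∃ n, m = n + 1 + 2 := ⟨m - 3, by omega⟩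
  refine ⟨e.symm (e x - 1), e.symm (e x + 1), ?_, ?_, ?_⟩
  · intro h
    have h1 : e x - 1 = e x + 1 := e.symm.toEquiv.injective h
    have h2 : (1 : Fin (n + 1 + 2)) + 1 = 0 := by
      have h4 : e x + 0 = e x + (1 + 1) := by
        rw [add_zero, ← add_assoc]
        exact sub_eq_iff_eq_add.mp h1
      exact (add_left_cancel h4).symm
    have := congrArg Fin.val h2
    simp [Fin.add_def, Nat.mod_eq_of_lt] at this
  · rw [← e.map_rel_iff, e.apply_symm_apply, cycleGraph_adj]
    left
    exact sub_sub_cancel _ _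
  · rw [← e.map_rel_iff, e.apply_symm_apply, cycleGraph_adj]
    right
    exact add_sub_cancel_left _ _

example : True := trivial

private lemma no_C4 {V : Type*} {G : SimpleGraph V} {f : V → Fin 4} (hf : IsTreeColoring G f)
    {p q r s : V} {i j : Fin 4}
    (hp : f p = i ∨ f p = j) (hq : f q = i ∨ f q = j) (hr : f r = i ∨ f r = j)
    (hs : f s = i ∨ f s = j)
    (hpq : G.Adj p q) (hqr : G.Adj q r) (hps : G.Adj p s) (hsr : G.Adj s r)
    (hqs : q ≠ s) (hpr : p ≠ r) : False := by
  have hac := hf.2 i j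
  exact no_two_paths hac
    (p := ⟨p, hp⟩) (q := ⟨q, hq⟩) (r := ⟨r, hr⟩) (s := ⟨s, hs⟩)
    hpq hqr hps hsr
    (by simpa [Subtype.ext_iff] using hqs) (by simpa [Subtype.ext_iff] using hpr)

private lemma deg_ge_five {V : Type*} [Fintype V] [DecidableEq V] (G : SimpleGraph V)
    [DecidableRel G.Adj]
    (hnbrcyc : ∀ u : V, NeighborhoodInducesCycle G u)
    (f : V → Fin 4) (hf : IsTreeColoring G f)
    (w v a b x : V)
    (hwv : G.Adj w v) (hwa : G.Adj w a) (hwb : G.Adj w b)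
    (hva : G.Adj v a) (hvb : G.Adj v b) (hvx : G.Adj v x)
    (hax : G.Adj a x) (hbx : G.Adj b x)
    (hwx : ¬ G.Adj w x) (hab' : ¬ G.Adj a b) (hab : a ≠ b)
    (hfwx : f w ≠ f x) (hfab : f a = f b) :
    5 ≤ G.degree w := by
  by_contra hlt
  push_neg at hlt
  have hsub : ({v, a, b} : Finset V) ⊆ G.neighborFinset w := by
    intro t ht
    simp only [Finset.mem_insert, Finset.mem_singleton] at ht
    rw [mem_neighborFinset]
    rcases ht with rfl | rfl | rfl
    · exact hwv
    · exact hwa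
    · exact hwb
  have hc3 : ({v, a, b} : Finset V).card = 3 := by
    rw [Finset.card_insert_of_notMem (by simp [hva.ne, hvb.ne]),
      Finset.card_insert_of_notMem (by simp [hab]), Finset.card_singleton]
  have hge : 3 ≤ G.degree w := by
    rw [← hc3]; exact Finset.card_le_card hsub
  obtain ⟨m, hm, ⟨e⟩⟩ := hnbrcyc w
  have haw : a ∈ G.neighborSet w := hwa
  rcases (by omega : G.degree w = 3 ∨ G.degree w = 4) with h3 | h4
  · -- degree 3 : neighborhood is {v,a,b}
    have hfin : ({v, a, b} : Finset V) = G.neighborFinset w :=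
      Finset.eq_of_subset_of_card_le hsub (by rw [hc3]; exact le_of_eq h3)
    obtain ⟨y, z, hyz, hay, haz⟩ := cycle_two_nbrs hm e ⟨a, haw⟩
    have key : ∀ u : ↥(G.neighborSet w), (G.induce (G.neighborSet w)).Adj ⟨a, haw⟩ u →
        u.val = v := by
      rintro ⟨t, ht⟩ hadj
      have ht' : t ∈ ({v, a, b} : Finset V) := by rw [hfin, mem_neighborFinset]; exact ht
      have hadj' : G.Adj a t := hadj
      simp only [Finset.mem_insert, Finset.mem_singleton] at ht'
      rcases ht' with rfl | rfl | rfl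
      · rfl
      · exact absurd hadj' G.irrefl
      · exact absurd hadj' hab'
    exact hyz (Subtype.ext ((key y hay).trans (key z haz).symm))
  · -- degree 4 : neighborhood is {v,a,b,u}
    have hne : (G.neighborFinset w \ {v, a, b}).Nonempty := by
      rw [← Finset.card_pos, Finset.card_sdiff_of_subset hsub, hc3]
      have : (G.neighborFinset w).card = 4 := h4
      omega
    obtain ⟨u, hu⟩ := hne
    rw [Finset.mem_sdiff] at hu
    obtain ⟨huN, huvab⟩ := hu
    simp only [Finset.mem_insert, Finset.mem_singleton, not_or] at huvab
    obtain ⟨huv, hua, hub⟩ := huvab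
    have hwu : G.Adj w u := (mem_neighborFinset _ _ _).mp huN
    have hfin : insert u ({v, a, b} : Finset V) = G.neighborFinset w := by
      apply Finset.eq_of_subset_of_card_le
      · intro t ht
        rcases Finset.mem_insert.mp ht with rfl | ht
        · exact huN
        · exact hsub ht
      · rw [Finset.card_insert_of_notMem (by simp [huv, hua, hub]), hc3]
        exact le_of_eq h4
    have mem4 : ∀ t : ↥(G.neighborSet w), t.val = u ∨ t.val = v ∨ t.val = a ∨ t.val = b := by
      rintro ⟨t, ht⟩
      have : t ∈ insert u ({v, a, b} : Finset V) := by rw [hfin, mem_neighborFinset]; exact ht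
      simpa using this
    -- a is adjacent to u
    have hget : ∀ c : V, (hc : c ∈ G.neighborSet w) → G.Adj c v → ¬ G.Adj c a → ¬ G.Adj c b →
        G.Adj c u := by
      intro c hc hcv hca hcb
      obtain ⟨y, z, hyz, hy, hz⟩ := cycle_two_nbrs hm e ⟨c, hc⟩
      have key : ∀ t : ↥(G.neighborSet w), (G.induce (G.neighborSet w)).Adj ⟨c, hc⟩ t →
          t.val = u ∨ t.val = v := by
        intro t hadj
        have hadj' : G.Adj c t.val := hadj
        rcases mem4 t with h | h | h | h
        · exact Or.inl h
        · exact Or.inr h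
        · rw [h] at hadj'; exact absurd hadj' hca
        · rw [h] at hadj'; exact absurd hadj' hcb
      have hy' : G.Adj c y.val := hy
      have hz' : G.Adj c z.val := hz
      rcases key y hy with h1 | h1 <;> rcases key z hz with h2 | h2
      · rw [← h1]; exact hy'
      · rw [← h1]; exact hy'
      · rw [← h2]; exact hz'
      · exact absurd (Subtype.ext (h1.trans h2.symm)) hyz
    have hau : G.Adj a u := hget a haw (hva.symm) (by simp) hab'
    have hbu : G.Adj b u := hget b hwb (hvb.symm) (fun h => hab' h.symm) (by simp)
    -- pigeonhole on colors
    have hfu : f u = f x ∨ f u = f v := by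
      have huniv : ({f w, f a, f x, f v} : Finset (Fin 4)) = Finset.univ := by
        apply Finset.eq_univ_of_card
        rw [Finset.card_insert_of_notMem
            (by simp [hf.1 hwa, hfwx, hf.1 hwv]),
          Finset.card_insert_of_notMem
            (by simp [hf.1 hax, (hf.1 hva).symm]),
          Finset.card_insert_of_notMem (by simp [(hf.1 hvx).symm]),
          Finset.card_singleton]
        simp
      have : f u ∈ ({f w, f a, f x, f v} : Finset (Fin 4)) := by
        rw [huniv]; exact Finset.mem_univ _
      simp only [Finset.mem_insert, Finset.mem_singleton] at this
      rcases this with h | h | h | h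
      · exact absurd h (hf.1 hwu).symm.elim
      · exact absurd h (hf.1 hau).symm.elim
      · exact Or.inl h
      · exact Or.inr h
    -- u is distinct from v and x
    have hux : u ≠ x := fun h => hwx (h ▸ hwu)
    rcases hfu with hfu | hfu
    · -- 4-cycle a x b u in colors (f a, f x)
      exact no_C4 hf (p := a) (q := x) (r := b) (s := u) (i := f a) (j := f x)
        (Or.inl rfl) (Or.inr rfl) (Or.inl hfab.symm) (Or.inr hfu)
        hax (hbx.symm) hau (hbu.symm) (Ne.symm hux) hab
    · -- 4-cycle a v b u in colors (f a, f v)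
      exact no_C4 hf (p := a) (q := v) (r := b) (s := u) (i := f a) (j := f v)
        (Or.inl rfl) (Or.inr rfl) (Or.inl hfab.symm) (Or.inr hfu)
        (hva.symm) hvb hau (hbu.symm) (Ne.symm huv) hab

/-- Lemma 1: in a tree-colorable 4-connected maximal planar graph, if `v` is a
degree-4 vertex with neighbors `v1 v2 v3 v4` in cyclic order and a tree-coloring `f`
satisfies `f v1 ≠ f v3`, then `f` uses exactly three colors on the neighborhood of `v`,
and both `v1` and `v3` have degree at least 5. -/
theorem tree_coloring_degree_four_neighbors
    {V : Type*} [Fintype V] [DecidableEq V] (G : SimpleGraph V) [DecidableRel G.Adj]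
    (hn : 5 ≤ Fintype.card V)
    (hconn : G.Connected)
    (hedges : G.edgeFinset.card = 3 * Fintype.card V - 6)
    (hnbrcyc : ∀ u : V, NeighborhoodInducesCycle G u)
    (f : V → Fin 4) (hf : IsTreeColoring G f)
    (v v1 v2 v3 v4 : V)
    (hdeg : G.degree v = 4)
    (hnbr : G.neighborSet v = {v1, v2, v3, v4})
    (h12 : G.Adj v1 v2) (h23 : G.Adj v2 v3) (h34 : G.Adj v3 v4) (h41 : G.Adj v4 v1)
    (h13 : ¬ G.Adj v1 v3) (h24 : ¬ G.Adj v2 v4)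
    (hcol : f v1 ≠ f v3) :
    ({f v1, f v2, f v3, f v4} : Finset (Fin 4)).card = 3 ∧
      5 ≤ G.degree v1 ∧ 5 ≤ G.degree v3 := by
  have hv1 : G.Adj v v1 := by rw [← G.mem_neighborSet, hnbr]; simp
  have hv2 : G.Adj v v2 := by rw [← G.mem_neighborSet, hnbr]; simp
  have hv3 : G.Adj v v3 := by rw [← G.mem_neighborSet, hnbr]; simp
  have hv4 : G.Adj v v4 := by rw [← G.mem_neighborSet, hnbr]; simp
  have hF : G.neighborFinset v = {v1, v2, v3, v4} := by
    ext t
    rw [mem_neighborFinset, ← G.mem_neighborSet, hnbr]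
    simp
  have hcard4 : ({v1, v2, v3, v4} : Finset V).card = 4 := by rw [← hF]; exact hdeg
  have h3le : ∀ a b c : V, ({a, b, c} : Finset V).card ≤ 3 := by
    intro a b c
    refine (Finset.card_insert_le _ _).trans ?_
    have := (Finset.card_insert_le b ({c} : Finset V))
    simp only [Finset.card_singleton] at this
    omega
  have h24ne : v2 ≠ v4 := by
    intro h
    subst h
    have hsub : ({v1, v2, v3, v2} : Finset V) ⊆ {v1, v2, v3} := by
      intro t ht; simp at ht; simp; tauto
    have := Finset.card_le_card hsub
    have := h3le v1 v2 v3
    omega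
  -- part 1 : f v2 = f v4
  have hfv24 : f v2 = f v4 := by
    by_contra hne
    have huniv : ({f v1, f v2, f v3, f v4} : Finset (Fin 4)) = Finset.univ := by
      apply Finset.eq_univ_of_card
      rw [Finset.card_insert_of_notMem (by simp [hf.1 h12, hcol, (hf.1 h41).symm]),
        Finset.card_insert_of_notMem (by simp [hf.1 h23, hne]),
        Finset.card_insert_of_notMem (by simp [hf.1 h34]),
        Finset.card_singleton]
      simp
    have : f v ∈ ({f v1, f v2, f v3, f v4} : Finset (Fin 4)) := by
      rw [huniv]; exact Finset.mem_univ _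
    simp only [Finset.mem_insert, Finset.mem_singleton] at this
    rcases this with h | h | h | h
    · exact hf.1 hv1 h
    · exact hf.1 hv2 h
    · exact hf.1 hv3 h
    · exact hf.1 hv4 h
  refine ⟨?_, ?_, ?_⟩
  · -- three colors
    have hset : ({f v1, f v2, f v3, f v4} : Finset (Fin 4)) = {f v1, f v2, f v3} := by
      ext t; simp only [Finset.mem_insert, Finset.mem_singleton, ← hfv24]; tauto
    rw [hset, Finset.card_insert_of_notMem (by simp [hf.1 h12, hcol]),
      Finset.card_insert_of_notMem (by simp [hf.1 h23]), Finset.card_singleton]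
  · exact deg_ge_five G hnbrcyc f hf v1 v v2 v4 v3
      hv1.symm h12 h41.symm hv2 hv4 hv3 h23 h34.symm h13 h24 h24ne hcol hfv24
  · exact deg_ge_five G hnbrcyc f hf v3 v v2 v4 v1
      hv3.symm h23.symm h34 hv2 hv4 hv1 h12.symm h41 (fun h => h13 h.symm) h24 h24ne
      hcol.symm hfv24
end

section
/- Let G be a simple graph admitting a tree-coloring f, and let v be a vertex of G whose open neighborhood is exactly {v1, v2, v3, v4}, where v1v2, v2v3, v3v4, v4v1 are edges of G, v1v3 and v2v4 are not edges of G, and f(v1) = f(v3). Let H be the simple graph on the vertex set V(G) \ {v, v3} in which two distinct vertices x and y are adjacent if and only if xy is an edge of G, or x = v1 and y is adjacent to v3 in G, or y = v1 and x is adjacent to v3 in G (i.e., H is obtained from G by deleting v and identifying v1 with v3). Then H admits a tree-coloring; indeed, the restriction of f to V(G) \ {v, v3} is a tree-coloring of H. -/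
open SimpleGraph

/-- The spanning subgraph of `G` with edges restricted to those inside `S`. -/
def restrictGraph {V : Type*} (G : SimpleGraph V) (S : Set V) : SimpleGraph V where
  Adj x y := G.Adj x y ∧ x ∈ S ∧ y ∈ S
  symm := ⟨fun _ _ ⟨h, hx, hy⟩ => ⟨h.symm, hy, hx⟩⟩
  loopless := ⟨fun x h => G.loopless.irrefl x h.1⟩

lemma restrictGraph_adj_of {V : Type*} (G : SimpleGraph V) (S : Set V) {x y : V}
    (h : G.Adj x y) (hx : x ∈ S) (hy : y ∈ S) : (restrictGraph G S).Adj x y := ⟨h, hx, hy⟩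

lemma restrict_lift {V : Type*} (G : SimpleGraph V) (S : Set V) {x y : V}
    (p : (restrictGraph G S).Walk x y) :
    ∀ (x' y' : S), x'.1 = x → y'.1 = y →
      ∃ q : (G.induce S).Walk x' y',
        q.support.map Subtype.val = p.support ∧
        q.edges.map (Sym2.map Subtype.val) = p.edges := by
  induction p with
  | nil =>
    intro x' y' hx hy
    have : x' = y' := Subtype.ext (hx.trans hy.symm)
    subst this
    exact ⟨.nil, by simp [hx], by simp⟩
  | @cons a b c h p ih =>
    intro x' y' hx hy
    obtain ⟨q, hs, he⟩ := ih ⟨b, h.2.2⟩ y' rfl hy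
    refine ⟨.cons (by exact hx ▸ h.1) q, by simp [hs, hx], by simp [he, hx]⟩

lemma restrict_acyclic {V : Type*} (G : SimpleGraph V) (S : Set V)
    (h : (G.induce S).IsAcyclic) : (restrictGraph G S).IsAcyclic := by
  intro c p hp
  have hc : c ∈ S := by
    cases p with
    | nil => simp [Walk.isCycle_def] at hp
    | cons h _ => exact h.2.1
  obtain ⟨q, hs, he⟩ := restrict_lift G S p ⟨c, hc⟩ ⟨c, hc⟩ rfl rfl
  apply h q
  rw [Walk.isCycle_def, Walk.isTrail_def] at hp ⊢
  obtain ⟨ht, hnn, hnd⟩ := hp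
  refine ⟨?_, ?_, ?_⟩
  · exact (he ▸ ht).of_map _
  · intro hqn
    subst hqn
    have hlen := congrArg List.length hs
    simp [Walk.length_support] at hlen
    exact hnn (Walk.nil_iff_eq_nil.mp hlen)
  · have : q.support.tail.map Subtype.val = p.support.tail := by
      rw [← hs]; exact List.map_tail
    exact (this ▸ hnd).of_map _

lemma walk_support_prop {V : Type*} {W : SimpleGraph V} (P : V → Prop)
    (hW : ∀ ⦃x y : V⦄, W.Adj x y → P y) {u w : V} (p : W.Walk u w) (hu : P u) :
    ∀ x ∈ p.support, P x := by
  induction p with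
  | nil => intro x hx; rw [Walk.support_nil, List.mem_singleton] at hx; exact hx ▸ hu
  | cons h p ih =>
    intro x hx
    rw [Walk.support_cons, List.mem_cons] at hx
    rcases hx with rfl | hx
    · exact hu
    · exact ih (hW h) x hx

/-- The contraction-auxiliary graph on the full vertex set. -/
def contractGraph {V : Type*} (G : SimpleGraph V) (v v1 v3 : V) (T : Set V) :
    SimpleGraph V where
  Adj x y := x ≠ y ∧ x ≠ v ∧ y ≠ v ∧ x ≠ v3 ∧ y ≠ v3 ∧ x ∈ T ∧ y ∈ T ∧
    (G.Adj x y ∨ (x = v1 ∧ G.Adj v3 y) ∨ (y = v1 ∧ G.Adj v3 x))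
  symm := by
    constructor
    rintro x y ⟨h1, h2, h3, h4, h5, h6, h7, h8⟩
    refine ⟨h1.symm, h3, h2, h5, h4, h7, h6, ?_⟩
    rcases h8 with h | ⟨hx, hy⟩ | ⟨hy, hx⟩
    · exact Or.inl h.symm
    · exact Or.inr (Or.inr ⟨hx, hy⟩)
    · exact Or.inr (Or.inl ⟨hy, hx⟩)
  loopless := ⟨fun x h => h.1 rfl⟩


/-- Lemma 2 (coloring transfer): let `v` be a vertex whose open neighborhood is exactly
`{v1, v2, v3, v4}`, forming an induced 4-cycle `v1 v2 v3 v4`, and let `f` be a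
tree-coloring of `G` with `f v1 = f v3`. If `H` is the graph on `V(G) \ {v, v3}`
obtained from `G` by deleting `v` and identifying `v1` with `v3` (two distinct vertices
`x, y` of `H` are adjacent iff `xy ∈ E(G)`, or `x = v1` and `y` is adjacent to `v3`, or
`y = v1` and `x` is adjacent to `v3`), then the restriction of `f` is a tree-coloring
of `H`. -/
theorem tree_coloring_contract_four_wheel
    {V : Type*} (G : SimpleGraph V) (f : V → Fin 4) (hf : IsTreeColoring G f)
    (v v1 v2 v3 v4 : V)
    (hnbr : G.neighborSet v = {v1, v2, v3, v4})
    (h12 : G.Adj v1 v2) (h23 : G.Adj v2 v3) (h34 : G.Adj v3 v4) (h41 : G.Adj v4 v1)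
    (h13 : ¬ G.Adj v1 v3) (h24 : ¬ G.Adj v2 v4)
    (hne13 : v1 ≠ v3) (hne24 : v2 ≠ v4)
    (hcol : f v1 = f v3)
    (H : SimpleGraph {x : V // x ≠ v ∧ x ≠ v3})
    (hH : ∀ x y : {x : V // x ≠ v ∧ x ≠ v3},
      H.Adj x y ↔ x ≠ y ∧ (G.Adj x.1 y.1 ∨ (x.1 = v1 ∧ G.Adj v3 y.1) ∨
        (y.1 = v1 ∧ G.Adj v3 x.1))) :
    IsTreeColoring H (fun x => f x.1) := by
  -- basic adjacencies from the neighborhood hypothesis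
  have hvv1 : G.Adj v v1 := by
    rw [← SimpleGraph.mem_neighborSet, hnbr]; simp
  have hvv2 : G.Adj v v2 := by
    rw [← SimpleGraph.mem_neighborSet, hnbr]; simp
  have hvv3 : G.Adj v v3 := by
    rw [← SimpleGraph.mem_neighborSet, hnbr]; simp
  have hvv4 : G.Adj v v4 := by
    rw [← SimpleGraph.mem_neighborSet, hnbr]; simp
  -- color distinctness facts
  have dv1 : f v ≠ f v1 := hf.1 hvv1
  have dv2 : f v ≠ f v2 := hf.1 hvv2
  have dv4 : f v ≠ f v4 := hf.1 hvv4
  have d21 : f v2 ≠ f v1 := (hf.1 h12).symm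
  have d41 : f v4 ≠ f v1 := hf.1 h41
  have d24 : f v2 ≠ f v4 := by
    intro hc24
    have hac := hf.2 (f v1) (f v2)
    have m1 : v1 ∈ {x | f x = f v1 ∨ f x = f v2} := Or.inl rfl
    have m2 : v2 ∈ {x | f x = f v1 ∨ f x = f v2} := Or.inr rfl
    have m3 : v3 ∈ {x | f x = f v1 ∨ f x = f v2} := Or.inl hcol.symm
    have m4 : v4 ∈ {x | f x = f v1 ∨ f x = f v2} := Or.inr hc24.symm
    let GI := G.induce {x | f x = f v1 ∨ f x = f v2}
    let p1 : GI.Walk ⟨v1, m1⟩ ⟨v3, m3⟩ :=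
      .cons (show GI.Adj ⟨v1, m1⟩ ⟨v2, m2⟩ by exact h12)
        (.cons (show GI.Adj ⟨v2, m2⟩ ⟨v3, m3⟩ by exact h23) .nil)
    let p2 : GI.Walk ⟨v1, m1⟩ ⟨v3, m3⟩ :=
      .cons (show GI.Adj ⟨v1, m1⟩ ⟨v4, m4⟩ by exact h41.symm)
        (.cons (show GI.Adj ⟨v4, m4⟩ ⟨v3, m3⟩ by exact h34.symm) .nil)
    have hp1 : p1.IsPath := by
      rw [Walk.isPath_def]
      simp [p1, Subtype.ext_iff]
      exact ⟨⟨h12.ne, hne13⟩, h23.ne⟩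
    have hp2 : p2.IsPath := by
      rw [Walk.isPath_def]
      simp [p2, Subtype.ext_iff]
      exact ⟨⟨h41.ne', hne13⟩, h34.ne'⟩
    have := hac.path_unique ⟨p1, hp1⟩ ⟨p2, hp2⟩
    have hsup := congrArg (fun q : GI.Path ⟨v1, m1⟩ ⟨v3, m3⟩ => q.1.getVert 1) this
    simp only [p1, p2, Walk.getVert_cons_succ, Walk.getVert_zero] at hsup
    exact hne24 (congrArg Subtype.val hsup)
  constructor
  · -- properness
    intro x y hxy
    rw [hH] at hxy
    obtain ⟨hne, hadj | ⟨hx1, hadj⟩ | ⟨hy1, hadj⟩⟩ := hxy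
    · exact hf.1 hadj
    · simp only [hx1, hcol]; exact hf.1 hadj
    · simp only [hy1, ← hcol]
      intro hh
      exact hf.1 hadj (hcol ▸ hh.symm)
  · -- acyclicity
    intro i j
    set T : Set V := {x | f x = i ∨ f x = j} with hT
    have hGT : (restrictGraph G T).IsAcyclic := restrict_acyclic G T (hf.2 i j)
    have key : (contractGraph G v v1 v3 T).IsAcyclic := by
      classical
      intro c q hq
      by_cases hv1s : v1 ∈ q.support
      · -- the cycle passes through v1
        have hq2 : (q.rotate v1 hv1s).IsCycle := hq.rotate hv1s
        revert hq2
        generalize q.rotate v1 hv1s = q2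
        intro hq2
        cases q2 with
        | nil => simp [Walk.isCycle_def] at hq2
        | @cons _ w _ hvw p =>
          rw [Walk.cons_isCycle_iff] at hq2
          obtain ⟨hp, hew⟩ := hq2
          -- decompose p from the far end
          have hpnil : ¬ p.reverse.Nil := by
            rw [Walk.not_nil_iff_lt_length, Walk.length_reverse,
              Nat.pos_iff_ne_zero]
            intro h0
            exact hvw.1.symm (Walk.eq_of_length_eq_zero h0)
          obtain ⟨u, hv1u, r, hr⟩ := Walk.not_nil_iff.mp hpnil
          have hrp : r.IsPath ∧ v1 ∉ r.support := by
            have := hp.reverse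
            rw [hr, Walk.cons_isPath_iff] at this
            exact ⟨this.1, this.2⟩
          have hs13 : ∀ x ∈ r.support, x ≠ v3 := by
            exact walk_support_prop (fun x => x ≠ v3)
              (fun x y (h : (contractGraph G v v1 v3 T).Adj x y) => h.2.2.2.2.1) r
              hv1u.2.2.2.2.1
          -- basic facts from the two edges at v1
          have uT : u ∈ T := hv1u.2.2.2.2.2.2.1
          have wT : w ∈ T := hvw.2.2.2.2.2.2.1
          have v1T : v1 ∈ T := hvw.2.2.2.2.2.1
          have v3T : v3 ∈ T := by
            rcases v1T with h | h
            · exact Or.inl (hcol ▸ h)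
            · exact Or.inr (hcol ▸ h)
          have huadj : G.Adj v1 u ∨ G.Adj v3 u := by
            rcases hv1u.2.2.2.2.2.2.2 with h | ⟨_, h⟩ | ⟨h, _⟩
            · exact Or.inl h
            · exact Or.inr h
            · exact absurd h.symm hv1u.1
          have hwadj : G.Adj v1 w ∨ G.Adj v3 w := by
            rcases hvw.2.2.2.2.2.2.2 with h | ⟨_, h⟩ | ⟨h, _⟩
            · exact Or.inl h
            · exact Or.inr h
            · exact absurd h.symm hvw.1
          have huw : u ≠ w := by
            have h1 : s(v1, u) ∈ p.edges := by
              have : s(v1, u) ∈ p.reverse.edges := by rw [hr]; simp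
              rwa [Walk.edges_reverse, List.mem_reverse] at this
            intro h
            subst h
            exact hew h1
          -- transfer the path r to the restricted graph
          have hredge : ∀ e ∈ r.edges, e ∈ (restrictGraph G T).edgeSet := by
            intro e he
            induction e with
            | h x y =>
              have hadj := r.adj_of_mem_edges he
              have hx : x ∈ r.support := r.fst_mem_support_of_mem_edges he
              have hy : y ∈ r.support := r.snd_mem_support_of_mem_edges he
              rcases hadj.2.2.2.2.2.2.2 with h | ⟨hx1, _⟩ | ⟨hy1, _⟩
              · exact ⟨h, hadj.2.2.2.2.2.1, hadj.2.2.2.2.2.2.1⟩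
              · exact absurd (hx1 ▸ hx) hrp.2
              · exact absurd (hy1 ▸ hy) hrp.2
          set r' := r.transfer _ hredge with hr'
          have hr'p : r'.IsPath := hrp.1.transfer _
          have hr's : r'.support = r.support := Walk.support_transfer _ _
          -- the case where both edges attach on the same side
          have both : ∀ z, z ∈ T → G.Adj z u → G.Adj z w → z ∉ r.support → False := by
            intro z hzT hzu hzw hzs
            let A : (restrictGraph G T).Walk u w :=
              .cons (restrictGraph_adj_of G T hzu.symm uT hzT) (.cons (restrictGraph_adj_of G T hzw hzT wT) .nil)
            have hA : A.IsPath := by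
              rw [Walk.isPath_def]
              simp [A]
              exact ⟨⟨hzu.ne', huw⟩, hzw.ne⟩
            have heq := hGT.path_unique ⟨A, hA⟩ ⟨r', hr'p⟩
            have hz : z ∈ r'.support := by
              have := congrArg (fun P : (restrictGraph G T).Path u w => P.1.support) heq
              simp only [A] at this
              rw [← this]
              simp
            rw [hr's] at hz
            exact hzs hz
          -- the mixed case
          have mixed : ∀ (u' w' : V) (r2 : (restrictGraph G T).Walk u' w'),
              r2.IsPath → v1 ∉ r2.support → v3 ∉ r2.support → u' ≠ w' →
              G.Adj v1 u' → G.Adj v3 w' → u' ∈ T → w' ∈ T → False := by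
            intro u' w' r2 hr2 hnv1 hnv3 hne' hu' hw' huT' hwT'
            have hbne : f u' ≠ f v1 := (hf.1 hu').symm
            have hcase : f u' = f v ∨ f u' = f v2 ∨ f u' = f v4 := by
              by_contra hb
              push_neg at hb
              obtain ⟨b1, b2, b3⟩ := hb
              have e0 : (f u').1 ≠ (f v1).1 := fun h => hbne (Fin.ext h)
              have e1 : (f u').1 ≠ (f v).1 := fun h => b1 (Fin.ext h)
              have e2 : (f u').1 ≠ (f v2).1 := fun h => b2 (Fin.ext h)
              have e3 : (f u').1 ≠ (f v4).1 := fun h => b3 (Fin.ext h)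
              have e4 : (f v).1 ≠ (f v1).1 := fun h => dv1 (Fin.ext h)
              have e5 : (f v).1 ≠ (f v2).1 := fun h => dv2 (Fin.ext h)
              have e6 : (f v).1 ≠ (f v4).1 := fun h => dv4 (Fin.ext h)
              have e7 : (f v2).1 ≠ (f v1).1 := fun h => d21 (Fin.ext h)
              have e8 : (f v4).1 ≠ (f v1).1 := fun h => d41 (Fin.ext h)
              have e9 : (f v2).1 ≠ (f v4).1 := fun h => d24 (Fin.ext h)
              have l0 := (f u').isLt
              have l1 := (f v1).isLt
              have l2 := (f v).isLt
              have l3 := (f v2).isLt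
              have l4 := (f v4).isLt
              omega
            obtain ⟨m, hm1, hm3, hmc⟩ :
                ∃ m, G.Adj v1 m ∧ G.Adj m v3 ∧ f m = f u' := by
              rcases hcase with h | h | h
              · exact ⟨v, hvv1.symm, hvv3, h.symm⟩
              · exact ⟨v2, h12, h23, h.symm⟩
              · exact ⟨v4, h41.symm, h34.symm, h.symm⟩
            have mT : m ∈ T := by
              rcases huT' with h | h
              · exact Or.inl (hmc.trans h)
              · exact Or.inr (hmc.trans h)
            let P : (restrictGraph G T).Walk v1 v3 :=
              .cons (restrictGraph_adj_of G T hu' v1T huT') (r2.append (.cons (restrictGraph_adj_of G T hw'.symm hwT' v3T) .nil))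
            let Q : (restrictGraph G T).Walk v1 v3 :=
              .cons (restrictGraph_adj_of G T hm1 v1T mT) (.cons (restrictGraph_adj_of G T hm3 mT v3T) .nil)
            have hPp : P.IsPath := by
              rw [Walk.isPath_def]
              simp only [P, Walk.support_cons, Walk.support_append,
                Walk.support_cons, Walk.support_nil, List.tail_cons]
              rw [List.nodup_cons]
              constructor
              · intro hmem
                rw [List.mem_append] at hmem
                rcases hmem with h | h
                · exact hnv1 h
                · rw [List.mem_singleton] at h
                  exact hne13 h
              · rw [List.nodup_append]
                refine ⟨hr2.support_nodup, List.nodup_singleton _, ?_⟩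
                intro a ha b hb hab
                rw [List.mem_singleton] at hb
                subst hb
                subst hab
                exact hnv3 ha
            have hQp : Q.IsPath := by
              rw [Walk.isPath_def]
              simp [Q]
              exact ⟨⟨hm1.ne, hne13⟩, hm3.ne⟩
            have heq := hGT.path_unique ⟨P, hPp⟩ ⟨Q, hQp⟩
            have hlen := congrArg
              (fun X : (restrictGraph G T).Path v1 v3 => X.1.length) heq
            simp only [P, Q, Walk.length_cons, Walk.length_append,
              Walk.length_nil] at hlen
            have : r2.length = 0 := by omega
            exact hne' (Walk.eq_of_length_eq_zero this)
          -- case analysis on the attachments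
          rcases huadj with hu' | hu' <;> rcases hwadj with hw' | hw'
          · exact both v1 v1T hu' hw' hrp.2
          · exact mixed u w r' hr'p (hr's ▸ hrp.2)
              (by rw [hr's]; intro hmem; exact hs13 v3 hmem rfl) huw hu' hw' uT wT
          · exact mixed w u r'.reverse hr'p.reverse
              (by rw [Walk.support_reverse, List.mem_reverse, hr's]; exact hrp.2)
              (by rw [Walk.support_reverse, List.mem_reverse, hr's]
                  intro hmem; exact hs13 v3 hmem rfl)
              huw.symm hw' hu' wT uT
          · exact both v3 v3T hu' hw'
              (by intro hmem; exact hs13 v3 hmem rfl)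
      · -- v1 not on the cycle: transfer it directly to the restricted graph
        have hsub : ∀ e ∈ q.edges, e ∈ (restrictGraph G T).edgeSet := by
          intro e he
          induction e with
          | h x y =>
            have hadj := q.adj_of_mem_edges he
            have hx := q.fst_mem_support_of_mem_edges he
            have hy := q.snd_mem_support_of_mem_edges he
            rcases hadj.2.2.2.2.2.2.2 with h | ⟨hx1, _⟩ | ⟨hy1, _⟩
            · exact ⟨h, hadj.2.2.2.2.2.1, hadj.2.2.2.2.2.2.1⟩
            · exact absurd (hx1 ▸ hx) hv1s
            · exact absurd (hy1 ▸ hy) hv1s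
        exact hGT _ (hq.transfer hsub)
      -- now transfer a would-be cycle of `H.induce S` into `contractGraph`
    intro c p hp
    let φ : (H.induce {w | f w.1 = i ∨ f w.1 = j}) →g (contractGraph G v v1 v3 T) :=
      ⟨fun x => x.1.1, by
        rintro x y hadj
        have hxy := (hH x.1 y.1).mp hadj
        refine ⟨fun hv => hxy.1 (Subtype.ext hv), x.1.2.1, y.1.2.1, x.1.2.2, y.1.2.2,
          x.2, y.2, hxy.2⟩⟩
    have hinj : Function.Injective φ := by
      intro x y h
      exact Subtype.ext (Subtype.ext h)
    exact key _ (hp.map hinj)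
end

section
/- Let G be the pentagonal bipyramid: the simple graph on seven vertices c1, c2, c3, c4, c5, a, b whose edges are the 5-cycle c1c2, c2c3, c3c4, c4c5, c5c1 together with all edges from a to each ci and from b to each ci (a and b are not adjacent); equivalently, G is the join of the cycle C5 with the empty graph on two vertices. Then G admits no tree-coloring: for every proper coloring f : V(G) → Fin 4 there exist two colors i, j such that the subgraph of G induced by the vertices colored i or j contains a cycle. -/
open SimpleGraph

/-- The pentagonal bipyramid: the join of a 5-cycle (vertices `Sum.inl i`) with two
nonadjacent apex vertices (`Sum.inr 0` and `Sum.inr 1`). -/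
def pentagonalBipyramid : SimpleGraph (Fin 5 ⊕ Fin 2) :=
  SimpleGraph.fromRel (fun x y =>
    match x, y with
    | Sum.inl i, Sum.inl j => j = i + 1
    | Sum.inl _, Sum.inr _ => True
    | _, _ => False)

lemma four_cycle {V : Type*} {G : SimpleGraph V} {a x b y : V}
    (hax : G.Adj a x) (hxb : G.Adj x b) (hby : G.Adj b y) (hya : G.Adj y a)
    (hab : a ≠ b) (hxy : x ≠ y) : ¬ G.IsAcyclic := by
  intro h
  exact h (Walk.cons hax (Walk.cons hxb (Walk.cons hby (Walk.cons hya Walk.nil))))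
    (by
      constructor
      · constructor
        · simp [Walk.isTrail_def, Sym2.eq, Sym2.rel_iff', hax.ne, hxb.ne, hby.ne, hya.ne,
            hab, hxy, hab.symm, hxy.symm, hax.ne', hxb.ne', hby.ne', hya.ne']
        · simp
      · simp [hab, hxy, hxb.ne, hby.ne, hya.ne, hax.ne', hxb.ne', hby.ne', hya.ne', hxy.symm, hab.symm])

lemma hApex : ∀ (i : Fin 5) (k : Fin 2), pentagonalBipyramid.Adj (Sum.inl i) (Sum.inr k) := by
  intro i k
  simp [pentagonalBipyramid, fromRel_adj]

lemma hCyc : ∀ i : Fin 5, pentagonalBipyramid.Adj (Sum.inl i) (Sum.inl (i + 1)) := by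
  intro i
  simp only [pentagonalBipyramid, fromRel_adj]
  refine ⟨?_, Or.inl trivial⟩
  simp only [ne_eq, Sum.inl.injEq]
  omega

lemma helper (f : Fin 5 ⊕ Fin 2 → Fin 4) (p q : Fin 5) (hpq : p ≠ q)
    (hcol : f (Sum.inl p) = f (Sum.inl q)) (hab : f (Sum.inr 0) = f (Sum.inr 1)) :
    ∃ i j : Fin 4,
      ¬ (pentagonalBipyramid.induce {v | f v = i ∨ f v = j}).IsAcyclic := by
  refine ⟨f (Sum.inr 0), f (Sum.inl p), ?_⟩
  have ha : Sum.inr 0 ∈ {v | f v = f (Sum.inr (0:Fin 2)) ∨ f v = f (Sum.inl p)} := Or.inl rfl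
  have hb : Sum.inr 1 ∈ {v | f v = f (Sum.inr (0:Fin 2)) ∨ f v = f (Sum.inl p)} := Or.inl hab.symm
  have hp : Sum.inl p ∈ {v | f v = f (Sum.inr (0:Fin 2)) ∨ f v = f (Sum.inl p)} := Or.inr rfl
  have hq : Sum.inl q ∈ {v | f v = f (Sum.inr (0:Fin 2)) ∨ f v = f (Sum.inl p)} := Or.inr hcol.symm
  exact four_cycle (a := ⟨Sum.inr 0, ha⟩) (x := ⟨Sum.inl p, hp⟩) (b := ⟨Sum.inr 1, hb⟩)
    (y := ⟨Sum.inl q, hq⟩)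
    ((hApex p 0).symm) (hApex p 1) ((hApex q 1).symm) (hApex q 0)
    (by simp) (by simp [hpq])

lemma key : ∀ a b c1 c2 c3 c4 c5 : Fin 4,
    (a ≠ c1 ∧ a ≠ c2 ∧ a ≠ c3 ∧ a ≠ c4 ∧ a ≠ c5 ∧
    b ≠ c1 ∧ b ≠ c2 ∧ b ≠ c3 ∧ b ≠ c4 ∧ b ≠ c5 ∧
    c1 ≠ c2 ∧ c2 ≠ c3 ∧ c3 ≠ c4 ∧ c4 ≠ c5 ∧ c5 ≠ c1) →
    a = b ∧ (c1 = c3 ∨ c1 = c4 ∨ c2 = c4 ∨ c2 = c5 ∨ c3 = c5) := by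
  set_option maxHeartbeats 1000000 in
  set_option synthInstance.maxHeartbeats 400000 in
  set_option synthInstance.maxSize 2000 in
  decide

/-- The pentagonal bipyramid admits no tree-coloring: every proper 4-coloring has two
color classes whose union induces a subgraph containing a cycle. -/
theorem pentagonalBipyramid_no_tree_coloring
    (f : Fin 5 ⊕ Fin 2 → Fin 4)
    (hf : ∀ ⦃u v : Fin 5 ⊕ Fin 2⦄, pentagonalBipyramid.Adj u v → f u ≠ f v) :
    ∃ i j : Fin 4,
      ¬ (pentagonalBipyramid.induce {v | f v = i ∨ f v = j}).IsAcyclic := by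
  obtain ⟨hab, hd⟩ := key (f (Sum.inr 0)) (f (Sum.inr 1)) (f (Sum.inl 0)) (f (Sum.inl 1))
    (f (Sum.inl 2)) (f (Sum.inl 3)) (f (Sum.inl 4))
    ⟨hf (hApex 0 0).symm, hf (hApex 1 0).symm, hf (hApex 2 0).symm, hf (hApex 3 0).symm,
     hf (hApex 4 0).symm,
     hf (hApex 0 1).symm, hf (hApex 1 1).symm, hf (hApex 2 1).symm, hf (hApex 3 1).symm,
     hf (hApex 4 1).symm,
     hf (hCyc 0), hf (hCyc 1), hf (hCyc 2), hf (hCyc 3), hf (hCyc 4)⟩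
  rcases hd with h | h | h | h | h
  · exact helper f 0 2 (by decide) h hab
  · exact helper f 0 3 (by decide) h hab
  · exact helper f 1 3 (by decide) h hab
  · exact helper f 1 4 (by decide) h hab
  · exact helper f 2 4 (by decide) h hab
end
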